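/- Invariant incidence ratios (Proposition 1). Assume Consistency, Exposure necessity, Exclusion restriction, Blinding, Treatment exchangeability, Positivity, Exposure exchangeability, and the sharp null hypothesis of no waning. Assume the nondegeneracy conditions E[ΔY1 | A=0] > 0, E[ΔY2 | A=0] > 0, P(E1[0]=1) > 0 and E[Y1[0,1]] > 0. Then IR1 = IR2, i.e. E[ΔY1 | A=1]/E[ΔY1 | A=0] = E[ΔY2 | A=1]/E[ΔY2 | A=0]. -/

import Mathlib

open MeasureTheory ProbabilityTheory
open scoped ProbabilityTheory

section Helpers
variable {Ω : Type*} [MeasurableSpace Ω] {μ : Measure Ω}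

private lemma integrable_bin [IsFiniteMeasure μ] {f : Ω → ℝ} (hm : Measurable f)
    (h : ∀ ω, f ω = 0 ∨ f ω = 1) : Integrable f μ := by
  refine (integrable_const (1:ℝ)).mono' hm.aestronglyMeasurable ?_
  filter_upwards with ω
  rcases h ω with h'|h' <;> simp [h']

private lemma integral_bin {f : Ω → ℝ} (hm : Measurable f)
    (h : ∀ ω, f ω = 0 ∨ f ω = 1) :
    ∫ ω, f ω ∂μ = (μ {ω | f ω = 1}).toReal := by
  have hset : MeasurableSet {ω | f ω = 1} := hm (measurableSet_singleton 1)
  have hfe : f = Set.indicator {ω | f ω = 1} (1 : Ω → ℝ) := by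
    funext ω
    rcases h ω with h'|h' <;> simp [Set.indicator_apply, Set.mem_setOf_eq, h']
  conv_lhs => rw [hfe]
  rw [integral_indicator_one hset, measureReal_def]

private lemma integral_cond_eq_inv_mul [IsFiniteMeasure μ] {s : Set Ω} (f : Ω → ℝ) :
    ∫ ω, f ω ∂(μ[|s]) = (μ s).toReal⁻¹ * ∫ ω in s, f ω ∂μ := by
  rw [ProbabilityTheory.cond, integral_smul_measure, ENNReal.toReal_inv, smul_eq_mul]

private lemma ae_cond_of_ae_imp {s : Set Ω} (hs : MeasurableSet s) {p : Ω → Prop}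
    (h : ∀ᵐ ω ∂μ, ω ∈ s → p ω) : ∀ᵐ ω ∂(μ[|s]), p ω := by
  rw [ProbabilityTheory.cond]
  exact Measure.ae_smul_measure ((ae_restrict_iff' hs).2 h) _

end Helpers



open MeasureTheory ProbabilityTheory
open scoped ProbabilityTheory

/-- Proposition 1 (Invariant incidence ratios). -/
theorem invariant_incidence_ratios
    {Ω : Type*} [MeasurableSpace Ω] (μ : Measure Ω) [IsProbabilityMeasure μ]
    (A E1 E2 DY1 DY2 : Ω → ℝ)
    (E1p : ℝ → Ω → ℝ) (E2p Y1p Y2p Wp : ℝ → ℝ → Ω → ℝ)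
    (hAm : Measurable A) (hE1m : Measurable E1) (hE2m : Measurable E2)
    (hDY1m : Measurable DY1) (hDY2m : Measurable DY2)
    (hE1pm : ∀ a ∈ ({0, 1} : Set ℝ), Measurable (E1p a))
    (hE2pm : ∀ a ∈ ({0, 1} : Set ℝ), ∀ e1 ∈ ({0, 1} : Set ℝ), Measurable (E2p a e1))
    (hY1pm : ∀ a ∈ ({0, 1} : Set ℝ), ∀ e1 ∈ ({0, 1} : Set ℝ), Measurable (Y1p a e1))
    (hY2pm : ∀ a ∈ ({0, 1} : Set ℝ), ∀ e2 ∈ ({0, 1} : Set ℝ), Measurable (Y2p a e2))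
    (hWpm : ∀ a ∈ ({0, 1} : Set ℝ), ∀ e1 ∈ ({0, 1} : Set ℝ), Measurable (Wp a e1))
    (hAr : ∀ ω, A ω = 0 ∨ A ω = 1) (hE1r : ∀ ω, E1 ω = 0 ∨ E1 ω = 1)
    (hE2r : ∀ ω, E2 ω = 0 ∨ E2 ω = 1)
    (hDY1r : ∀ ω, DY1 ω = 0 ∨ DY1 ω = 1) (hDY2r : ∀ ω, DY2 ω = 0 ∨ DY2 ω = 1)
    (hE1pr : ∀ a ∈ ({0, 1} : Set ℝ), ∀ ω, E1p a ω = 0 ∨ E1p a ω = 1)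
    (hE2pr : ∀ a ∈ ({0, 1} : Set ℝ), ∀ e1 ∈ ({0, 1} : Set ℝ), ∀ ω,
      E2p a e1 ω = 0 ∨ E2p a e1 ω = 1)
    (hY1pr : ∀ a ∈ ({0, 1} : Set ℝ), ∀ e1 ∈ ({0, 1} : Set ℝ), ∀ ω,
      Y1p a e1 ω = 0 ∨ Y1p a e1 ω = 1)
    (hY2pr : ∀ a ∈ ({0, 1} : Set ℝ), ∀ e2 ∈ ({0, 1} : Set ℝ), ∀ ω,
      Y2p a e2 ω = 0 ∨ Y2p a e2 ω = 1)
    (hWpr : ∀ a ∈ ({0, 1} : Set ℝ), ∀ e1 ∈ ({0, 1} : Set ℝ), ∀ ω,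
      Wp a e1 ω = 0 ∨ Wp a e1 ω = 1)
    (hmono : ∀ ω, DY1 ω = 1 → DY2 ω = 0)
    -- Consistency
    (hconsE1 : ∀ a ∈ ({0, 1} : Set ℝ), ∀ᵐ ω ∂μ, A ω = a → E1 ω = E1p a ω)
    (hconsY1 : ∀ a ∈ ({0, 1} : Set ℝ), ∀ e1 ∈ ({0, 1} : Set ℝ),
      ∀ᵐ ω ∂μ, A ω = a → E1 ω = e1 → DY1 ω = Y1p a e1 ω)
    (hconsE2 : ∀ a ∈ ({0, 1} : Set ℝ), ∀ e1 ∈ ({0, 1} : Set ℝ),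
      ∀ᵐ ω ∂μ, A ω = a → E1 ω = e1 → E2 ω = E2p a e1 ω)
    (hconsY2 : ∀ a ∈ ({0, 1} : Set ℝ), ∀ e2 ∈ ({0, 1} : Set ℝ),
      ∀ᵐ ω ∂μ, A ω = a → E1 ω = 0 → E2 ω = e2 → DY2 ω = Y2p a e2 ω)
    (hconsW : ∀ a ∈ ({0, 1} : Set ℝ), ∀ e1 ∈ ({0, 1} : Set ℝ),
      ∀ᵐ ω ∂μ, A ω = a → E1 ω = e1 → DY1 ω = 0 → E2 ω = 1 → DY2 ω = Wp a e1 ω)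
    -- Exposure necessity
    (hnecY1 : ∀ a ∈ ({0, 1} : Set ℝ), ∀ᵐ ω ∂μ, Y1p a 0 ω = 0)
    (hnecY2 : ∀ a ∈ ({0, 1} : Set ℝ), ∀ᵐ ω ∂μ, Y2p a 0 ω = 0)
    (hnecE2 : ∀ᵐ ω ∂μ, E2 ω = 0 → DY2 ω = 0)
    -- Exclusion restriction
    (hexcl : ∀ a ∈ ({0, 1} : Set ℝ), ∀ᵐ ω ∂μ, Wp a 1 ω = Y2p a 1 ω ∧ Wp a 0 ω = Y2p a 1 ω)
    -- Blinding
    (hblind1 : ∀ᵐ ω ∂μ, E1p 0 ω = E1p 1 ω)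
    (hblind2 : ∀ᵐ ω ∂μ, E2p 0 0 ω = E2p 1 0 ω)
    -- Treatment exchangeability
    (hexch : IndepFun A (fun ω => ![E1p 0 ω, E1p 1 ω,
      E2p 0 0 ω, E2p 0 1 ω, E2p 1 0 ω, E2p 1 1 ω,
      Y1p 0 0 ω, Y1p 0 1 ω, Y1p 1 0 ω, Y1p 1 1 ω,
      Y2p 0 0 ω, Y2p 0 1 ω, Y2p 1 0 ω, Y2p 1 1 ω,
      Wp 0 0 ω, Wp 0 1 ω, Wp 1 0 ω, Wp 1 1 ω]) μ)
    -- Positivity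
    (hpos : 0 < (μ {ω | A ω = 1}).toReal ∧ (μ {ω | A ω = 1}).toReal < 1)
    -- Exposure exchangeability
    (heeY1 : ∀ a ∈ ({0, 1} : Set ℝ), ∀ e1 ∈ ({0, 1} : Set ℝ), IndepFun (E1p a) (Y1p a e1) μ)
    (heeY2cond : ∀ a ∈ ({0, 1} : Set ℝ), ∀ e2 ∈ ({0, 1} : Set ℝ), ∀ e ∈ ({0, 1} : Set ℝ),
      IndepFun (E1p a) (Y2p a e2) (μ[|{ω | E2p a 0 ω = e}]))
    (heeE2 : ∀ a ∈ ({0, 1} : Set ℝ), ∀ e2 ∈ ({0, 1} : Set ℝ), IndepFun (E2p a 0) (Y2p a e2) μ)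
    -- Sharp null hypothesis of no waning
    (hnull : ∀ a ∈ ({0, 1} : Set ℝ), ∀ᵐ ω ∂μ, Y1p a 1 ω = Y2p a 1 ω)
    -- Nondegeneracy
    (hd1 : 0 < ∫ ω, DY1 ω ∂(μ[|{ω | A ω = 0}]))
    (hd2 : 0 < ∫ ω, DY2 ω ∂(μ[|{ω | A ω = 0}]))
    (hd3 : 0 < (μ {ω | E1p 0 ω = 1}).toReal)
    (hd4 : 0 < ∫ ω, Y1p 0 1 ω ∂μ) :
    (∫ ω, DY1 ω ∂(μ[|{ω | A ω = 1}])) / (∫ ω, DY1 ω ∂(μ[|{ω | A ω = 0}])) =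
      (∫ ω, DY2 ω ∂(μ[|{ω | A ω = 1}])) / (∫ ω, DY2 ω ∂(μ[|{ω | A ω = 0}])) := by
  
  -- memberships
  have h0S : (0:ℝ) ∈ ({0, 1} : Set ℝ) := by norm_num
  have h1S : (1:ℝ) ∈ ({0, 1} : Set ℝ) := by norm_num
  -- basic measurability
  have hs1m : MeasurableSet {ω | A ω = 1} := hAm (measurableSet_singleton 1)
  have hs0m : MeasurableSet {ω | A ω = 0} := hAm (measurableSet_singleton 0)
  -- nonzero measures of treatment arms
  have h1ne : μ {ω | A ω = 1} ≠ 0 := by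
    intro h
    rw [h] at hpos
    simp at hpos
  have hcompl : {ω | A ω = 0} = {ω | A ω = 1}ᶜ := by
    ext ω
    simp only [Set.mem_setOf_eq, Set.mem_compl_iff]
    constructor
    · intro h h1
      rw [h1] at h; norm_num at h
    · intro h
      exact (hAr ω).resolve_right h
  have h0ne : μ {ω | A ω = 0} ≠ 0 := by
    rw [hcompl, prob_compl_eq_one_sub hs1m]
    intro h
    rw [tsub_eq_zero_iff_le] at h
    have h2 : (1 : ENNReal).toReal ≤ (μ {ω | A ω = 1}).toReal :=
      ENNReal.toReal_mono (measure_ne_top μ _) h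
    simp only [ENNReal.toReal_one] at h2
    linarith [hpos.2]
  -- exchangeability transfer lemma
  have transfer : ∀ (g : Ω → ℝ) (ψ : (Fin 18 → ℝ) → ℝ), Measurable g → Measurable ψ →
      (∀ ω, g ω = ψ (![E1p 0 ω, E1p 1 ω,
        E2p 0 0 ω, E2p 0 1 ω, E2p 1 0 ω, E2p 1 1 ω,
        Y1p 0 0 ω, Y1p 0 1 ω, Y1p 1 0 ω, Y1p 1 1 ω,
        Y2p 0 0 ω, Y2p 0 1 ω, Y2p 1 0 ω, Y2p 1 1 ω,
        Wp 0 0 ω, Wp 0 1 ω, Wp 1 0 ω, Wp 1 1 ω])) → ∀ a : ℝ, μ {ω | A ω = a} ≠ 0 →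
      ∫ ω, g ω ∂(μ[|{ω | A ω = a}]) = ∫ ω, g ω ∂μ := by
    intro g ψ hgm hψ hgV a hane
    have hsm : MeasurableSet {ω | A ω = a} := hAm (measurableSet_singleton a)
    set φ : ℝ → ℝ := Set.indicator ({a} : Set ℝ) (fun _ => 1) with hφdef
    have hφm : Measurable φ := measurable_const.indicator (measurableSet_singleton a)
    have hind : IndepFun (φ ∘ A) (fun ω => ψ (![E1p 0 ω, E1p 1 ω,
        E2p 0 0 ω, E2p 0 1 ω, E2p 1 0 ω, E2p 1 1 ω,
        Y1p 0 0 ω, Y1p 0 1 ω, Y1p 1 0 ω, Y1p 1 1 ω,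
        Y2p 0 0 ω, Y2p 0 1 ω, Y2p 1 0 ω, Y2p 1 1 ω,
        Wp 0 0 ω, Wp 0 1 ω, Wp 1 0 ω, Wp 1 1 ω])) μ := hexch.comp hφm hψ
    have hgeq : g = fun ω => ψ (![E1p 0 ω, E1p 1 ω,
        E2p 0 0 ω, E2p 0 1 ω, E2p 1 0 ω, E2p 1 1 ω,
        Y1p 0 0 ω, Y1p 0 1 ω, Y1p 1 0 ω, Y1p 1 1 ω,
        Y2p 0 0 ω, Y2p 0 1 ω, Y2p 1 0 ω, Y2p 1 1 ω,
        Wp 0 0 ω, Wp 0 1 ω, Wp 1 0 ω, Wp 1 1 ω]) := funext hgV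
    rw [← hgeq] at hind
    have hφA : ∀ ω, (φ ∘ A) ω = Set.indicator {ω | A ω = a} (1 : Ω → ℝ) ω := by
      intro ω
      by_cases h : A ω = a <;>
        simp [hφdef, Set.indicator_apply, Set.mem_setOf_eq, h]
    have hmul : (fun ω => (φ ∘ A) ω * g ω) = Set.indicator {ω | A ω = a} g := by
      funext ω
      rw [hφA ω]
      by_cases h : A ω = a <;> simp [Set.indicator_apply, Set.mem_setOf_eq, h]
    have e1 : ∫ ω in {ω | A ω = a}, g ω ∂μ = (μ {ω | A ω = a}).toReal * ∫ ω, g ω ∂μ := by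
      rw [← integral_indicator hsm, ← hmul,
        hind.integral_fun_mul_eq_mul_integral (hφm.comp hAm).aestronglyMeasurable hgm.aestronglyMeasurable]
      congr 1
      rw [show (φ ∘ A) = Set.indicator {ω | A ω = a} (1 : Ω → ℝ) from funext hφA,
        integral_indicator_one hsm, measureReal_def]
    have htne : (μ {ω | A ω = a}).toReal ≠ 0 :=
      ENNReal.toReal_ne_zero.2 ⟨hane, measure_ne_top μ _⟩
    rw [integral_cond_eq_inv_mul, e1, inv_mul_cancel_left₀ htne]
  -- the central computation, for each arm a
  have main : ∀ a, a ∈ ({0, 1} : Set ℝ) → μ {ω | A ω = a} ≠ 0 →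
      (∫ ω, (E1p a ω * Y1p a 1 ω) ∂(μ[|{ω | A ω = a}]) = ∫ ω, E1p a ω * Y1p a 1 ω ∂μ) →
      (∫ ω, ((1 - E1p a ω) * (E2p a 0 ω * Y2p a 1 ω)) ∂(μ[|{ω | A ω = a}])
          = ∫ ω, (1 - E1p a ω) * (E2p a 0 ω * Y2p a 1 ω) ∂μ) →
      ((∫ ω, DY1 ω ∂(μ[|{ω | A ω = a}])) = (∫ ω, E1p a ω ∂μ) * (∫ ω, Y1p a 1 ω ∂μ)
        ∧ (∫ ω, DY2 ω ∂(μ[|{ω | A ω = a}]))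
            = (∫ ω, (1 - E1p a ω) * E2p a 0 ω ∂μ) * (∫ ω, Y1p a 1 ω ∂μ)) := by
    intro a haS hane ht1 ht2
    have hsm : MeasurableSet {ω | A ω = a} := hAm (measurableSet_singleton a)
    have hE1am : Measurable (E1p a) := hE1pm a haS
    have hE2m0 : Measurable (E2p a 0) := hE2pm a haS 0 h0S
    have hE20r : ∀ ω, E2p a 0 ω = 0 ∨ E2p a 0 ω = 1 := hE2pr a haS 0 h0S
    have hY2m : Measurable (Y2p a 1) := hY2pm a haS 1 h1S
    have hY1m : Measurable (Y1p a 1) := hY1pm a haS 1 h1S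
    have hYeq : ∫ ω, Y2p a 1 ω ∂μ = ∫ ω, Y1p a 1 ω ∂μ :=
      integral_congr_ae ((hnull a haS).mono fun ω h => h.symm)
    constructor
    · -- DY1 part
      have hae1 : ∀ᵐ ω ∂μ, ω ∈ {ω | A ω = a} → DY1 ω = E1p a ω * Y1p a 1 ω := by
        filter_upwards [hconsE1 a haS, hconsY1 a haS 0 h0S, hconsY1 a haS 1 h1S, hnecY1 a haS]
          with ω hc1 hy0 hy1 hn ha'
        have hE1c : E1 ω = E1p a ω := hc1 ha'
        rcases hE1r ω with h|h
        · rw [hy0 ha' h, hn, ← hE1c, h, zero_mul]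
        · rw [hy1 ha' h, ← hE1c, h, one_mul]
      rw [integral_congr_ae (ae_cond_of_ae_imp hsm hae1), ht1]
      exact (heeY1 a haS 1 h1S).integral_fun_mul_eq_mul_integral hE1am.aestronglyMeasurable
        hY1m.aestronglyMeasurable
    · -- DY2 part
      have hae2 : ∀ᵐ ω ∂μ, ω ∈ {ω | A ω = a} →
          DY2 ω = (1 - E1p a ω) * (E2p a 0 ω * Y2p a 1 ω) := by
        filter_upwards [hconsE1 a haS, hconsY1 a haS 1 h1S, hconsE2 a haS 0 h0S,
          hconsY2 a haS 1 h1S, hconsW a haS 1 h1S, hnecE2, hexcl a haS, hnull a haS]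
          with ω hc1 hy1 hce2 hcy2 hcw hnec hex hnu ha'
        have hE1c : E1 ω = E1p a ω := hc1 ha'
        rcases hE1r ω with h0e|h1e
        · have hE2c : E2 ω = E2p a 0 ω := hce2 ha' h0e
          rcases hE2r ω with g0|g1
          · rw [hnec g0, ← hE2c, g0]
            ring
          · rw [hcy2 ha' h0e g1, ← hE1c, h0e, ← hE2c, g1]
            ring
        · have hRHS0 : (1 : ℝ) - E1p a ω = 0 := by rw [← hE1c, h1e]; ring
          rw [hRHS0, zero_mul]
          have hDY1 : DY1 ω = Y1p a 1 ω := hy1 ha' h1e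
          rcases hDY1r ω with d0|d1
          · rcases hE2r ω with g0|g1
            · exact hnec g0
            · rw [hcw ha' h1e d0 g1, hex.1, ← hnu, ← hDY1, d0]
          · exact hmono ω d1
      rw [integral_congr_ae (ae_cond_of_ae_imp hsm hae2), ht2]
      -- factorization of the unconditional integral
      have hBm : MeasurableSet {ω | E2p a 0 ω = 1} := hE2m0 (measurableSet_singleton 1)
      have hindic : ∀ g : Ω → ℝ,
          ∫ ω in {ω | E2p a 0 ω = 1}, g ω ∂μ = ∫ ω, E2p a 0 ω * g ω ∂μ := by
        intro g
        rw [← integral_indicator hBm]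
        congr 1
        funext ω
        rcases hE20r ω with h|h <;> simp [Set.indicator_apply, Set.mem_setOf_eq, h]
      by_cases hB : μ {ω | E2p a 0 ω = 1} = 0
      · have hz : ∀ᵐ ω ∂μ, E2p a 0 ω = 0 := by
          have hnm : ∀ᵐ ω ∂μ, ω ∉ {ω | E2p a 0 ω = 1} :=
            (measure_eq_zero_iff_ae_notMem (μ := μ)).1 hB
          filter_upwards [hnm] with ω hω
          exact (hE20r ω).resolve_right hω
        have z1 : ∫ ω, (1 - E1p a ω) * (E2p a 0 ω * Y2p a 1 ω) ∂μ = 0 := by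
          have hzz : (fun ω => (1 - E1p a ω) * (E2p a 0 ω * Y2p a 1 ω)) =ᵐ[μ] 0 := by
            filter_upwards [hz] with ω h
            simp [h]
          rw [integral_congr_ae hzz]; simp
        have z2 : ∫ ω, (1 - E1p a ω) * E2p a 0 ω ∂μ = 0 := by
          have hzz : (fun ω => (1 - E1p a ω) * E2p a 0 ω) =ᵐ[μ] 0 := by
            filter_upwards [hz] with ω h
            simp [h]
          rw [integral_congr_ae hzz]; simp
        rw [z1, z2, zero_mul]
      · have htne : (μ {ω | E2p a 0 ω = 1}).toReal ≠ 0 :=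
          ENNReal.toReal_ne_zero.2 ⟨hB, measure_ne_top μ _⟩
        have hcondint : ∀ g : Ω → ℝ, ∫ ω, g ω ∂(μ[|{ω | E2p a 0 ω = 1}])
            = (μ {ω | E2p a 0 ω = 1}).toReal⁻¹ * ∫ ω, E2p a 0 ω * g ω ∂μ := by
          intro g
          rw [integral_cond_eq_inv_mul, hindic]
        have hY2cond : ∫ ω, Y2p a 1 ω ∂(μ[|{ω | E2p a 0 ω = 1}]) = ∫ ω, Y2p a 1 ω ∂μ := by
          rw [hcondint,
            (heeE2 a haS 1 h1S).integral_fun_mul_eq_mul_integral hE2m0.aestronglyMeasurable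
              hY2m.aestronglyMeasurable,
            integral_bin hE2m0 hE20r, inv_mul_cancel_left₀ htne]
        have hE1cond : ∫ ω, (1 - E1p a ω) ∂(μ[|{ω | E2p a 0 ω = 1}])
            = (μ {ω | E2p a 0 ω = 1}).toReal⁻¹ * ∫ ω, (1 - E1p a ω) * E2p a 0 ω ∂μ := by
          rw [hcondint]
          congr 1
          congr 1
          funext ω
          ring
        have hi : IndepFun (fun ω => 1 - E1p a ω) (Y2p a 1) (μ[|{ω | E2p a 0 ω = 1}]) := by
          have hcomp := (heeY2cond a haS 1 h1S 1 h1S).comp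
            (show Measurable fun x : ℝ => (1:ℝ) - x from measurable_const.sub measurable_id)
            (measurable_id : Measurable (id : ℝ → ℝ))
          simpa [Function.comp_def] using hcomp
        have hsplit : ∫ ω, (1 - E1p a ω) * Y2p a 1 ω ∂(μ[|{ω | E2p a 0 ω = 1}]) =
            (∫ ω, (1 - E1p a ω) ∂(μ[|{ω | E2p a 0 ω = 1}]))
              * ∫ ω, Y2p a 1 ω ∂(μ[|{ω | E2p a 0 ω = 1}]) :=
          hi.integral_fun_mul_eq_mul_integral (measurable_const.sub hE1am).aestronglyMeasurable
            hY2m.aestronglyMeasurable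
        calc ∫ ω, (1 - E1p a ω) * (E2p a 0 ω * Y2p a 1 ω) ∂μ
            = ∫ ω, E2p a 0 ω * ((1 - E1p a ω) * Y2p a 1 ω) ∂μ := by
              congr 1
              funext ω
              ring
          _ = (μ {ω | E2p a 0 ω = 1}).toReal
                * ∫ ω, (1 - E1p a ω) * Y2p a 1 ω ∂(μ[|{ω | E2p a 0 ω = 1}]) := by
              rw [hcondint, mul_inv_cancel_left₀ htne]
          _ = (μ {ω | E2p a 0 ω = 1}).toReal
                * (((μ {ω | E2p a 0 ω = 1}).toReal⁻¹
                    * ∫ ω, (1 - E1p a ω) * E2p a 0 ω ∂μ) * ∫ ω, Y2p a 1 ω ∂μ) := by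
              rw [hsplit, hE1cond, hY2cond]
          _ = (∫ ω, (1 - E1p a ω) * E2p a 0 ω ∂μ) * ∫ ω, Y1p a 1 ω ∂μ := by
              rw [hYeq]
              field_simp
  -- instantiate the transfer lemma
  have t10 : ∫ ω, (E1p 0 ω * Y1p 0 1 ω) ∂(μ[|{ω | A ω = 0}])
      = ∫ ω, E1p 0 ω * Y1p 0 1 ω ∂μ :=
    transfer _ (fun v => v 0 * v 7) ((hE1pm 0 h0S).mul (hY1pm 0 h0S 1 h1S))
      ((measurable_pi_apply 0).mul (measurable_pi_apply 7)) (fun ω => rfl) 0 h0ne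
  have t11 : ∫ ω, (E1p 1 ω * Y1p 1 1 ω) ∂(μ[|{ω | A ω = 1}])
      = ∫ ω, E1p 1 ω * Y1p 1 1 ω ∂μ :=
    transfer _ (fun v => v 1 * v 9) ((hE1pm 1 h1S).mul (hY1pm 1 h1S 1 h1S))
      ((measurable_pi_apply 1).mul (measurable_pi_apply 9)) (fun ω => rfl) 1 h1ne
  have t20 : ∫ ω, ((1 - E1p 0 ω) * (E2p 0 0 ω * Y2p 0 1 ω)) ∂(μ[|{ω | A ω = 0}])
      = ∫ ω, (1 - E1p 0 ω) * (E2p 0 0 ω * Y2p 0 1 ω) ∂μ :=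
    transfer _ (fun v => (1 - v 0) * (v 2 * v 11))
      ((measurable_const.sub (hE1pm 0 h0S)).mul ((hE2pm 0 h0S 0 h0S).mul (hY2pm 0 h0S 1 h1S)))
      ((measurable_const.sub (measurable_pi_apply 0)).mul
        ((measurable_pi_apply 2).mul (measurable_pi_apply 11))) (fun ω => rfl) 0 h0ne
  have t21 : ∫ ω, ((1 - E1p 1 ω) * (E2p 1 0 ω * Y2p 1 1 ω)) ∂(μ[|{ω | A ω = 1}])
      = ∫ ω, (1 - E1p 1 ω) * (E2p 1 0 ω * Y2p 1 1 ω) ∂μ :=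
    transfer _ (fun v => (1 - v 1) * (v 4 * v 13))
      ((measurable_const.sub (hE1pm 1 h1S)).mul ((hE2pm 1 h1S 0 h0S).mul (hY2pm 1 h1S 1 h1S)))
      ((measurable_const.sub (measurable_pi_apply 1)).mul
        ((measurable_pi_apply 4).mul (measurable_pi_apply 13))) (fun ω => rfl) 1 h1ne
  obtain ⟨k10, k20⟩ := main 0 h0S h0ne t10 t20
  obtain ⟨k11, k21⟩ := main 1 h1S h1ne t11 t21
  -- blinding: equal first factors
  have hpeq : ∫ ω, E1p 1 ω ∂μ = ∫ ω, E1p 0 ω ∂μ :=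
    integral_congr_ae (hblind1.mono fun ω h => h.symm)
  have hqeq : ∫ ω, (1 - E1p 1 ω) * E2p 1 0 ω ∂μ = ∫ ω, (1 - E1p 0 ω) * E2p 0 0 ω ∂μ := by
    refine integral_congr_ae ?_
    filter_upwards [hblind1, hblind2] with ω h1 h2
    rw [h1, h2]
  rw [hpeq] at k11
  rw [hqeq] at k21
  -- positivity
  have hp0 : 0 < ∫ ω, E1p 0 ω ∂μ := by
    rw [integral_bin (hE1pm 0 h0S) (hE1pr 0 h0S)]
    exact hd3
  have hm0 : 0 < ∫ ω, Y1p 0 1 ω ∂μ := hd4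
  have hq0 : 0 < ∫ ω, (1 - E1p 0 ω) * E2p 0 0 ω ∂μ := by
    rw [k20] at hd2
    by_contra h
    push_neg at h
    nlinarith
  rw [k10, k11, k20, k21,
    mul_div_mul_left _ _ (ne_of_gt hp0), mul_div_mul_left _ _ (ne_of_gt hq0)]
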